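/- Let D be integrally closed with quotient field K, p ∈ D[X] monic of degree n with multi-set of roots Ω_p = {α_1,...,α_n} in a splitting field F, and D_F the integral closure of D in F. For f ∈ K[X], the following are equivalent: (i) f ∈ D(p) = D[X] + p·K[X]; (ii) Φ^k(f)(α_1,...,α_{k+1}) ∈ D[α_1,...,α_{k+1}] for all 0 ≤ k < n; (iii) Φ^k(f)(α_1,...,α_{k+1}) ∈ D_F for all 0 ≤ k < n. -/

import Mathlib

open Polynomial

variable (D : Type*) [CommRing D] [IsDomain D]

noncomputable abbrev K := FractionRing D

/-- The pullback `D(p) = D[X] + p·K[X]` as a subring of `K[X]`. -/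
noncomputable def Dp (p : D[X]) : Subring (Polynomial (K D)) where
  carrier := {f | ∃ r : D[X], ∃ q : Polynomial (K D),
    f = r.map (algebraMap D (K D)) + p.map (algebraMap D (K D)) * q}
  zero_mem' := ⟨0, 0, by simp⟩
  one_mem' := ⟨1, 0, by simp⟩
  add_mem' := by
    rintro a b ⟨r1, q1, rfl⟩ ⟨r2, q2, rfl⟩
    exact ⟨r1 + r2, q1 + q2, by push_cast [Polynomial.map_add]; ring⟩
  mul_mem' := by
    rintro a b ⟨r1, q1, rfl⟩ ⟨r2, q2, rfl⟩
    exact ⟨r1 * r2, r1.map (algebraMap D (K D)) * q2 + q1 * (r2.map (algebraMap D (K D)))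
      + p.map (algebraMap D (K D)) * q1 * q2, by push_cast [Polynomial.map_mul]; ring⟩
  neg_mem' := by
    rintro a ⟨r, q, rfl⟩
    exact ⟨-r, -q, by push_cast [Polynomial.map_neg]; ring⟩



/-- The `k`-th divided difference `Φ^k(f)(a 0, …, a k)` of a polynomial `f`, defined (in a way
valid also for repeated nodes) as the coefficient of `X^k` in the remainder of the division of
`f` by `∏ i, (X - a i)`; for pairwise distinct nodes this agrees with the recursive definition
`Φ^k(f)(X_0,…,X_k) = (Φ^{k-1}(f)(X_0,…,X_{k-1}) - Φ^{k-1}(f)(X_0,…,X_{k-2},X_k))/(X_{k-1}-X_k)`. -/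
noncomputable def divDiff {L : Type*} [Field L] (k : ℕ) (f : Polynomial L)
    (a : Fin (k + 1) → L) : L :=
  (f %ₘ ∏ i, (X - C (a i))).coeff k

section Aux

variable {L : Type*} [Field L]

/-- The Newton-basis polynomial `∏_{i<k} (X - α i)`. -/
noncomputable def Nw (α : ℕ → L) (k : ℕ) : L[X] :=
  ∏ i ∈ Finset.range k, (X - C (α i))

lemma Nw_monic (α : ℕ → L) (k : ℕ) : (Nw α k).Monic :=
  monic_prod_of_monic _ _ fun i _ => monic_X_sub_C _

lemma Nw_natDegree (α : ℕ → L) (k : ℕ) : (Nw α k).natDegree = k := by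
  rw [Nw, natDegree_prod_of_monic _ _ fun i _ => monic_X_sub_C _]
  simp

lemma Nw_degree (α : ℕ → L) (k : ℕ) : (Nw α k).degree = (k : WithBot ℕ) := by
  rw [degree_eq_natDegree (Nw_monic α k).ne_zero, Nw_natDegree]

lemma Nw_dvd (α : ℕ → L) {k l : ℕ} (h : k ≤ l) : Nw α k ∣ Nw α l :=
  Finset.prod_dvd_prod_of_subset _ _ _ (Finset.range_subset_range.2 h)

lemma mod_add_mul (a b t q : L[X]) (hq : q.Monic) (hdvd : q ∣ b) :
    (a + b * t) %ₘ q = a %ₘ q := by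
  obtain ⟨c, rfl⟩ := hdvd
  rw [add_modByMonic, mul_assoc, (modByMonic_eq_zero_iff_dvd hq).2 (dvd_mul_right _ _), add_zero]

/-- Newton expansion of the remainders. -/
lemma newton (h : L[X]) (α : ℕ → L) (k : ℕ) :
    h %ₘ Nw α (k + 1) =
      ∑ j ∈ Finset.range (k + 1), C ((h %ₘ Nw α (j + 1)).coeff j) * Nw α j := by
  induction k with
  | zero =>
    have h1 : Nw α (0 + 1) = X - C (α 0) := by simp [Nw]
    have h0 : Nw α 0 = 1 := by simp [Nw]
    rw [Finset.sum_range_one, h1, h0, modByMonic_X_sub_C_eq_C_eval, mul_one, coeff_C_zero]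
  | succ k ih =>
    set r := h %ₘ Nw α (k + 1 + 1) with hr
    set s := r - C (r.coeff (k + 1)) * Nw α (k + 1) with hs
    have hdegr : r.degree < ((k + 1 + 1 : ℕ) : WithBot ℕ) := by
      rw [hr, ← Nw_degree α (k + 1 + 1)]
      exact degree_modByMonic_lt _ (Nw_monic α (k + 1 + 1))
    have hdegs : s.degree < ((k + 1 : ℕ) : WithBot ℕ) := by
      rw [degree_lt_iff_coeff_zero]
      intro m hm
      rw [hs, coeff_sub, coeff_C_mul]
      rcases eq_or_lt_of_le hm with hm' | hm'
      · rw [← hm']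
        have h1 : (Nw α (k + 1)).coeff (k + 1) = 1 := by
          have := (Nw_monic α (k + 1)).coeff_natDegree
          rwa [Nw_natDegree] at this
        rw [h1, mul_one, sub_self]
      · have hm'' : (k + 1 + 1 : ℕ) ≤ m := hm'
        have h1 : r.coeff m = 0 := coeff_eq_zero_of_degree_lt
          (lt_of_lt_of_le hdegr (by exact_mod_cast hm''))
        have h2 : (Nw α (k + 1)).coeff m = 0 := coeff_eq_zero_of_degree_lt
          (by rw [Nw_degree]; exact_mod_cast hm')
        rw [h1, h2, mul_zero, sub_zero]
    have hsmod : s %ₘ Nw α (k + 1) = s :=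
      (modByMonic_eq_self_iff (Nw_monic α (k + 1))).2 (by rw [Nw_degree]; exact hdegs)
    have hrs : r = s + Nw α (k + 1) * C (r.coeff (k + 1)) := by rw [hs]; ring
    have hmod1 : h %ₘ Nw α (k + 1) = s := by
      have e1 : h = r + Nw α (k + 1 + 1) * (h /ₘ Nw α (k + 1 + 1)) := by
        rw [hr]; exact (modByMonic_add_div h (Nw α (k + 1 + 1))).symm
      conv_lhs => rw [e1]
      rw [mod_add_mul _ _ _ _ (Nw_monic α (k + 1)) (Nw_dvd α (Nat.le_succ _)), hrs,
        mod_add_mul _ _ _ _ (Nw_monic α (k + 1)) dvd_rfl, hsmod]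
    rw [Finset.sum_range_succ, ← ih, hmod1, ← hr, hs]
    ring

lemma coeff_mem_of_lifts (S : Subring L) {a b : L[X]} (hb : b.Monic)
    (ha : ∀ m, a.coeff m ∈ S) (hbs : ∀ m, b.coeff m ∈ S) (m : ℕ) : (a %ₘ b).coeff m ∈ S := by
  obtain ⟨a', ha'⟩ := (Polynomial.mem_lifts _).1
    ((Polynomial.lifts_iff_coeff_lifts (f := S.subtype) a).2 fun n => ⟨⟨a.coeff n, ha n⟩, rfl⟩)
  obtain ⟨b', hb', _, hb'monic⟩ := Polynomial.lifts_and_degree_eq_and_monic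
    ((Polynomial.lifts_iff_coeff_lifts (f := S.subtype) b).2 fun n => ⟨⟨b.coeff n, hbs n⟩, rfl⟩) hb
  rw [← ha', ← hb', ← Polynomial.map_modByMonic _ hb'monic, coeff_map]
  exact SetLike.coe_mem _

lemma Nw_coeff_mem (S : Subring L) {α : ℕ → L} {k : ℕ} (hα : ∀ i < k, α i ∈ S) (m : ℕ) :
    (Nw α k).coeff m ∈ S := by
  classical
  set β : ℕ → S := fun i => if h : i < k then ⟨α i, hα i h⟩ else 0 with hβ
  have hNw : Nw α k = (∏ i ∈ Finset.range k, (X - C (β i))).map S.subtype := by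
    rw [Polynomial.map_prod, Nw]
    refine Finset.prod_congr rfl fun i hi => ?_
    rw [Polynomial.map_sub, map_X, map_C]
    simp [hβ, Finset.mem_range.1 hi]
  rw [hNw, coeff_map]
  exact SetLike.coe_mem _

end Aux

/-- For `D` integrally closed, `p ∈ D[X]` monic of degree `n` with roots `α 0,…,α (n-1)` in a
splitting field `L`, and `f ∈ K[X]`, the following are equivalent: (i) `f ∈ D(p)`;
(ii) `Φ^k(f)(α 0,…,α k) ∈ D[α 0,…,α k]` for all `0 ≤ k < n`;
(iii) `Φ^k(f)(α 0,…,α k)` is integral over `D` for all `0 ≤ k < n`. -/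
theorem mem_Dp_iff_divDiff_integral [IsIntegrallyClosed D]
    (L : Type*) [Field L] [Algebra D L] [Algebra (K D) L] [IsScalarTower D (K D) L]
    (p : D[X]) (hp : p.Monic) (n : ℕ) (hdeg : p.natDegree = n) (hn : 0 < n) (α : ℕ → L)
    (hsplit : p.map (algebraMap D L) = ∏ i ∈ Finset.range n, (X - C (α i)))
    (f : Polynomial (K D)) :
    ((f ∈ Dp D p ↔
        ∀ k < n, divDiff k (f.map (algebraMap (K D) L)) (fun i : Fin (k + 1) => α i.1) ∈
          Algebra.adjoin D (α '' {i | i ≤ k})) ∧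
      ((∀ k < n, divDiff k (f.map (algebraMap (K D) L)) (fun i : Fin (k + 1) => α i.1) ∈
          Algebra.adjoin D (α '' {i | i ≤ k})) ↔
        ∀ k < n, IsIntegral D
          (divDiff k (f.map (algebraMap (K D) L)) (fun i : Fin (k + 1) => α i.1)))) := by
  have hψφ : algebraMap D L = (algebraMap (K D) L).comp (algebraMap D (K D)) :=
    IsScalarTower.algebraMap_eq D (K D) L
  set h := f.map (algebraMap (K D) L) with hh
  have hdd : ∀ k : ℕ,
      divDiff k h (fun i : Fin (k + 1) => α i.1) = (h %ₘ Nw α (k + 1)).coeff k := by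
    intro k
    rw [divDiff, Nw, ← Fin.prod_univ_eq_prod_range (fun i => X - C (α i)) (k + 1)]
  have hPL : p.map (algebraMap D L) = Nw α n := hsplit
  have hroot : ∀ i < n, IsIntegral D (α i) := by
    intro i hi
    refine ⟨p, hp, ?_⟩
    rw [← eval_map, hPL, Nw, eval_prod]
    exact Finset.prod_eq_zero (Finset.mem_range.2 hi) (by simp)
  have I : f ∈ Dp D p → ∀ k < n, divDiff k h (fun i : Fin (k + 1) => α i.1) ∈
      Algebra.adjoin D (α '' {i | i ≤ k}) := by
    rintro ⟨r, q, hf⟩ k hk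
    rw [hdd]
    have hhL : h = r.map (algebraMap D L) + Nw α n * q.map (algebraMap (K D) L) := by
      rw [hh, hf, Polynomial.map_add, Polynomial.map_mul, Polynomial.map_map,
        Polynomial.map_map, ← hψφ, hPL]
    rw [hhL, mod_add_mul _ _ _ _ (Nw_monic α (k + 1)) (Nw_dvd α hk)]
    rw [← Subalgebra.mem_toSubring]
    refine coeff_mem_of_lifts _ (Nw_monic α (k + 1)) (fun m => ?_) (fun m => ?_) k
    · rw [coeff_map, Subalgebra.mem_toSubring]
      exact Subalgebra.algebraMap_mem _ _
    · refine Nw_coeff_mem _ (fun i hi => ?_) m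
      rw [Subalgebra.mem_toSubring]
      exact Algebra.subset_adjoin ⟨i, Nat.lt_succ_iff.1 hi, rfl⟩
  have II : (∀ k < n, divDiff k h (fun i : Fin (k + 1) => α i.1) ∈
        Algebra.adjoin D (α '' {i | i ≤ k})) →
      ∀ k < n, IsIntegral D (divDiff k h (fun i : Fin (k + 1) => α i.1)) := by
    intro hii k hk
    have hle : Algebra.adjoin D (α '' {i | i ≤ k}) ≤ integralClosure D L := by
      apply Algebra.adjoin_le
      rintro x ⟨i, hi, rfl⟩
      exact hroot i (lt_of_le_of_lt hi hk)
    exact (mem_integralClosure_iff D L).1 (hle (hii k hk))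
  have III : (∀ k < n, IsIntegral D (divDiff k h (fun i : Fin (k + 1) => α i.1))) →
      f ∈ Dp D p := by
    intro hiii
    have hpm : (p.map (algebraMap D (K D))).Monic := hp.map _
    have hgmap : (f %ₘ p.map (algebraMap D (K D))).map (algebraMap (K D) L) = h %ₘ Nw α n := by
      rw [Polynomial.map_modByMonic _ hpm, Polynomial.map_map, ← hψφ, hPL, ← hh]
    have hnewton : h %ₘ Nw α n =
        ∑ j ∈ Finset.range n, C ((h %ₘ Nw α (j + 1)).coeff j) * Nw α j := by
      obtain ⟨m, rfl⟩ : ∃ m, n = m + 1 := ⟨n - 1, (Nat.succ_pred_eq_of_pos hn).symm⟩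
      exact newton h α m
    have hcoeff : ∀ m : ℕ, (f %ₘ p.map (algebraMap D (K D))).coeff m ∈
        Set.range (algebraMap D (K D)) := by
      intro m
      have h1 : IsIntegral D
          ((algebraMap (K D) L) ((f %ₘ p.map (algebraMap D (K D))).coeff m)) := by
        rw [← coeff_map, hgmap, hnewton, finset_sum_coeff]
        refine (mem_integralClosure_iff D L).1 (Subalgebra.sum_mem _ fun j hj => ?_)
        rw [coeff_C_mul]
        refine Subalgebra.mul_mem _ ?_ ?_
        · exact (mem_integralClosure_iff D L).2
            (by rw [← hdd]; exact hiii j (Finset.mem_range.1 hj))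
        · rw [← Subalgebra.mem_toSubring]
          refine Nw_coeff_mem _ (fun i hi => ?_) m
          rw [Subalgebra.mem_toSubring]
          exact (mem_integralClosure_iff D L).2
            (hroot i (lt_trans hi (Finset.mem_range.1 hj)))
      exact IsIntegrallyClosed.isIntegral_iff.1
        (h1.tower_bot (algebraMap (K D) L).injective)
    obtain ⟨r, hr⟩ := (Polynomial.mem_lifts _).1
      ((Polynomial.lifts_iff_coeff_lifts (f := algebraMap D (K D)) _).2 hcoeff)
    exact ⟨r, f /ₘ p.map (algebraMap D (K D)), by
      rw [hr]; exact (modByMonic_add_div f _).symm⟩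
  exact ⟨⟨I, fun hii => III (II hii)⟩, ⟨II, fun hiii => I (III hiii)⟩⟩
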